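/- Let β ≥ 3 and 0 < α ≤ β. Then for every δ > 0 there exists a constant C > 0, depending only on α, β and δ, such that for every ω′ ∈ ℝ and every k′ ∈ ℤ with k′ ≠ 0, one has ∑_{k ∈ ℤ, k ≠ 0, k ≠ k′} ∫_ℝ (|ω|^{1/2} + |k|)^{−α} · (|ω′ − ω|^{1/2} + |k′ − k|)^{−β} dω ≤ C · (|ω′|^{1/2} + |k′|)^{−α + δ}. -/

import Mathlib

open MeasureTheory

lemma aux_sqrt_tri (ω ω' : ℝ) :
    |ω'| ^ ((1:ℝ)/2) ≤ |ω| ^ ((1:ℝ)/2) + |ω' - ω| ^ ((1:ℝ)/2) := by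
  rw [← Real.sqrt_eq_rpow, ← Real.sqrt_eq_rpow, ← Real.sqrt_eq_rpow]
  have h1 : |ω'| ≤ |ω| + |ω' - ω| := by
    calc |ω'| = |ω + (ω' - ω)| := by ring_nf
    _ ≤ |ω| + |ω' - ω| := abs_add_le _ _
  calc Real.sqrt |ω'| ≤ Real.sqrt (|ω| + |ω' - ω|) := Real.sqrt_le_sqrt h1
  _ ≤ Real.sqrt |ω| + Real.sqrt |ω' - ω| := by
      have h := Real.sqrt_le_sqrt (show |ω| + |ω' - ω| ≤ (Real.sqrt |ω| + Real.sqrt |ω' - ω|)^2 by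
        nlinarith [Real.sq_sqrt (abs_nonneg ω), Real.sq_sqrt (abs_nonneg (ω' - ω)),
          Real.sqrt_nonneg |ω|, Real.sqrt_nonneg |ω' - ω|])
      rwa [Real.sqrt_sq (by positivity)] at h

lemma aux_key {α β δ' a b c : ℝ} (hδ0 : 0 < δ') (hδα : δ' ≤ α) (hαβ : α ≤ β)
    (ha : 1 ≤ a) (hb : 1 ≤ b) (hc1 : 1 ≤ c) (hcab : c ≤ a + b) :
    a ^ (-α) * b ^ (-β) ≤ 2 ^ α * c ^ (δ' - α) * (a ^ (-(β + δ')) + b ^ (-(β + δ'))) := by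
  have ha0 : (0:ℝ) < a := by linarith
  have hb0 : (0:ℝ) < b := by linarith
  have hc0 : (0:ℝ) < c := by linarith
  have h2 : (0:ℝ) < c/2 := by linarith
  have hhalf : (c/2) ^ (δ' - α) ≤ 2 ^ α * c ^ (δ' - α) := by
    rw [Real.div_rpow hc0.le (by norm_num : (0:ℝ) ≤ 2), div_eq_mul_inv, ← Real.rpow_neg
      (by norm_num : (0:ℝ) ≤ 2), mul_comm]
    have : (2:ℝ) ^ (-(δ' - α)) ≤ 2 ^ α :=
      Real.rpow_le_rpow_of_exponent_le one_le_two (by linarith)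
    exact mul_le_mul_of_nonneg_right this (Real.rpow_nonneg hc0.le _)
  rcases le_total a b with hab | hab
  · -- a ≤ b, so c/2 ≤ b
    have hcb : c/2 ≤ b := by linarith
    have e1 : b ^ (-β) = b ^ (δ' - α) * b ^ (-(β + δ' - α)) := by
      rw [← Real.rpow_add hb0]; ring_nf
    have e2 : b ^ (δ' - α) ≤ (c/2) ^ (δ' - α) :=
      Real.rpow_le_rpow_of_nonpos h2 hcb (by linarith)
    have e3 : b ^ (-(β + δ' - α)) ≤ a ^ (-(β + δ' - α)) :=
      Real.rpow_le_rpow_of_nonpos ha0 hab (by linarith)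
    have e4 : a ^ (-α) * a ^ (-(β + δ' - α)) = a ^ (-(β + δ')) := by
      rw [← Real.rpow_add ha0]; ring_nf
    calc a ^ (-α) * b ^ (-β) = (b ^ (δ' - α)) * (a ^ (-α) * b ^ (-(β + δ' - α))) := by
          rw [e1]; ring
    _ ≤ ((c/2) ^ (δ' - α)) * (a ^ (-α) * a ^ (-(β + δ' - α))) := by
        apply mul_le_mul e2 (mul_le_mul_of_nonneg_left e3 (Real.rpow_nonneg ha0.le _))
          (by positivity) (Real.rpow_nonneg h2.le _)
    _ = (c/2) ^ (δ' - α) * a ^ (-(β + δ')) := by rw [e4]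
    _ ≤ 2 ^ α * c ^ (δ' - α) * a ^ (-(β + δ')) :=
        mul_le_mul_of_nonneg_right hhalf (Real.rpow_nonneg ha0.le _)
    _ ≤ _ := by
        have := Real.rpow_nonneg hb0.le (-(β + δ'))
        nlinarith [Real.rpow_nonneg hc0.le (δ' - α), Real.rpow_nonneg (show (0:ℝ) ≤ 2 by norm_num) α,
          mul_nonneg (Real.rpow_nonneg (show (0:ℝ) ≤ 2 by norm_num) α) (Real.rpow_nonneg hc0.le (δ' - α))]
  · -- b ≤ a, so c/2 ≤ a
    have hca : c/2 ≤ a := by linarith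
    have e1 : a ^ (-α) = a ^ (δ' - α) * a ^ (-δ') := by
      rw [← Real.rpow_add ha0]; ring_nf
    have e2 : a ^ (δ' - α) ≤ (c/2) ^ (δ' - α) :=
      Real.rpow_le_rpow_of_nonpos h2 hca (by linarith)
    have e3 : a ^ (-δ') ≤ b ^ (-δ') :=
      Real.rpow_le_rpow_of_nonpos hb0 hab (by linarith)
    have e4 : b ^ (-δ') * b ^ (-β) = b ^ (-(β + δ')) := by
      rw [← Real.rpow_add hb0]; ring_nf
    calc a ^ (-α) * b ^ (-β) = (a ^ (δ' - α)) * (a ^ (-δ') * b ^ (-β)) := by rw [e1]; ring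
    _ ≤ ((c/2) ^ (δ' - α)) * (b ^ (-δ') * b ^ (-β)) := by
        apply mul_le_mul e2 (mul_le_mul_of_nonneg_right e3 (Real.rpow_nonneg hb0.le _))
          (by positivity) (Real.rpow_nonneg h2.le _)
    _ = (c/2) ^ (δ' - α) * b ^ (-(β + δ')) := by rw [e4]
    _ ≤ 2 ^ α * c ^ (δ' - α) * b ^ (-(β + δ')) :=
        mul_le_mul_of_nonneg_right hhalf (Real.rpow_nonneg hb0.le _)
    _ ≤ _ := by
        nlinarith [Real.rpow_nonneg ha0.le (-(β + δ')),
          mul_nonneg (Real.rpow_nonneg (show (0:ℝ) ≤ 2 by norm_num) α) (Real.rpow_nonneg hc0.le (δ' - α))]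

-- pointwise: (x + n)^(-γ) ≤ n^(-r) * (1 + x^2)^(-(q/2)) for x = |ω|^{1/2}
lemma aux_pt {γ q r : ℝ} (hq0 : 0 ≤ q) (hr0 : 0 ≤ r) (hrq : r + q ≤ γ)
    {n : ℝ} (hn : 1 ≤ n) (ω : ℝ) :
    (|ω| ^ ((1:ℝ)/2) + n) ^ (-γ) ≤ n ^ (-r) * (1 + |ω|) ^ (-(q/2)) := by
  set x := |ω| ^ ((1:ℝ)/2) with hx
  have hx0 : 0 ≤ x := Real.rpow_nonneg (abs_nonneg ω) _
  have hxn : (1:ℝ) ≤ x + n := by linarith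
  have h1 : (x + n) ^ (-γ) = (x + n) ^ (-(γ - q)) * (x + n) ^ (-q) := by
    rw [← Real.rpow_add (by linarith)]; ring_nf
  have h2 : (x + n) ^ (-(γ - q)) ≤ n ^ (-r) := by
    calc (x + n) ^ (-(γ - q)) ≤ n ^ (-(γ - q)) :=
        Real.rpow_le_rpow_of_nonpos (by linarith) (by linarith) (by linarith)
    _ ≤ n ^ (-r) := Real.rpow_le_rpow_of_exponent_le hn (by linarith)
  have hx2 : x ^ (2:ℕ) = |ω| := by
    rw [hx, ← Real.rpow_natCast (|ω| ^ ((1:ℝ)/2)) 2, ← Real.rpow_mul (abs_nonneg ω)]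
    norm_num
  have h3 : (x + n) ^ (-q) ≤ (1 + |ω|) ^ (-(q/2)) := by
    have hsq : 1 + |ω| ≤ (x + 1) ^ (2:ℕ) := by nlinarith
    have e : (x + 1) ^ (-q) = ((x + 1) ^ (2:ℕ)) ^ (-(q/2)) := by
      rw [← Real.rpow_natCast (x+1) 2, ← Real.rpow_mul (by linarith)]
      norm_num
      congr 1
      ring
    calc (x + n) ^ (-q) ≤ (x + 1) ^ (-q) :=
        Real.rpow_le_rpow_of_nonpos (by linarith) (by linarith) (by linarith)
    _ = ((x + 1) ^ (2:ℕ)) ^ (-(q/2)) := e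
    _ ≤ (1 + |ω|) ^ (-(q/2)) :=
        Real.rpow_le_rpow_of_nonpos (by positivity) hsq (by linarith)
  calc (x + n) ^ (-γ) = (x + n) ^ (-(γ - q)) * (x + n) ^ (-q) := h1
  _ ≤ n ^ (-r) * (1 + |ω|) ^ (-(q/2)) :=
      mul_le_mul h2 h3 (Real.rpow_nonneg (by linarith) _) (Real.rpow_nonneg (by linarith) _)

/-- Basic integral estimate, supercritical case: for `β ≥ 3` and `0 < α ≤ β`, for every
`δ > 0`,
`∑_{k ≠ 0, k ≠ k'} ∫ (|ω|^{1/2} + |k|)^{-α} (|ω'-ω|^{1/2} + |k'-k|)^{-β} dω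
  ≲ (|ω'|^{1/2} + |k'|)^{-α+δ}`. -/
theorem stmt4 (α β : ℝ) (hβ : 3 ≤ β) (hα0 : 0 < α) (hαβ : α ≤ β) (δ : ℝ) (hδ : 0 < δ) :
    ∃ C : ℝ, 0 < C ∧ ∀ (ω' : ℝ) (k' : ℤ), k' ≠ 0 →
      ∑' k : ℤ, (if k ≠ 0 ∧ k ≠ k' then
          ∫⁻ ω : ℝ, ENNReal.ofReal
            ((|ω| ^ ((1:ℝ)/2) + |(k : ℝ)|) ^ (-α) *
              (|ω' - ω| ^ ((1:ℝ)/2) + |(k' : ℝ) - (k : ℝ)|) ^ (-β))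
        else 0)
      ≤ ENNReal.ofReal (C * (|ω'| ^ ((1:ℝ)/2) + |(k' : ℝ)|) ^ (-α + δ)) := by
  obtain ⟨δ', hδ'0, hδ'α, hδ'δ⟩ : ∃ δ' : ℝ, 0 < δ' ∧ δ' ≤ α ∧ δ' ≤ δ :=
    ⟨min δ α, lt_min hδ hα0, min_le_right _ _, min_le_left _ _⟩
  obtain ⟨q, hqdef⟩ : ∃ q : ℝ, q = 2 + δ' / 2 := ⟨_, rfl⟩
  obtain ⟨r, hrdef⟩ : ∃ r : ℝ, r = 1 + δ' / 2 := ⟨_, rfl⟩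
  obtain ⟨γ, hγdef⟩ : ∃ γ : ℝ, γ = β + δ' := ⟨_, rfl⟩
  have hr1 : 1 < r := by rw [hrdef]; linarith
  have hr0 : 0 ≤ r := by linarith
  have hq0 : 0 ≤ q := by rw [hqdef]; linarith
  have hrq : r + q ≤ γ := by rw [hqdef, hrdef, hγdef]; linarith
  have hq2 : 1 < q / 2 := by rw [hqdef]; linarith
  have hint : Integrable (fun t : ℝ => (1 + |t|) ^ (-(q/2))) := by
    simpa using integrable_one_add_norm (E := ℝ) (r := q/2) (by simpa using hq2)
  obtain ⟨I₀, hI₀def⟩ : ∃ I₀ : ℝ, I₀ = ∫ t : ℝ, (1 + |t|) ^ (-(q/2)) := ⟨_, rfl⟩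
  have hI₀0 : 0 ≤ I₀ := by
    rw [hI₀def]; exact integral_nonneg fun t => Real.rpow_nonneg (by positivity) _
  have hgmeas : Measurable fun t : ℝ => ENNReal.ofReal ((1 + |t|) ^ (-(q/2))) := by fun_prop
  have hJ : ∫⁻ t : ℝ, ENNReal.ofReal ((1 + |t|) ^ (-(q/2))) = ENNReal.ofReal I₀ := by
    rw [hI₀def]
    exact (ofReal_integral_eq_lintegral_ofReal hint
      (Filter.Eventually.of_forall fun t => Real.rpow_nonneg (by positivity) _)).symm
  have hS : Summable fun k : ℤ => |(k:ℝ)| ^ (-r) := Real.summable_abs_int_rpow hr1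
  obtain ⟨S₀, hS₀def⟩ : ∃ S₀ : ℝ, S₀ = ∑' k : ℤ, |(k:ℝ)| ^ (-r) := ⟨_, rfl⟩
  have hS₀0 : 0 ≤ S₀ := by
    rw [hS₀def]; exact tsum_nonneg fun k => Real.rpow_nonneg (abs_nonneg _) _
  have hSofReal : ∑' k : ℤ, ENNReal.ofReal (|(k:ℝ)| ^ (-r)) = ENNReal.ofReal S₀ := by
    rw [hS₀def]
    exact (ENNReal.ofReal_tsum_of_nonneg (fun k => Real.rpow_nonneg (abs_nonneg _) _) hS).symm
  have h2α : (0:ℝ) < 2 ^ α := Real.rpow_pos_of_pos (by norm_num) _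
  refine ⟨2 ^ α * (2 * S₀ * I₀) + 1, by positivity, ?_⟩
  intro ω' k' hk'
  obtain ⟨c, hcdef⟩ : ∃ c : ℝ, c = |ω'| ^ ((1:ℝ)/2) + |(k':ℝ)| := ⟨_, rfl⟩
  have hk'1 : (1:ℝ) ≤ |(k':ℝ)| := by
    have h := Int.one_le_abs hk'
    have : ((1:ℤ):ℝ) ≤ ((|k'|:ℤ):ℝ) := by exact_mod_cast h
    simpa using this
  have hc1 : 1 ≤ c := by
    have := Real.rpow_nonneg (abs_nonneg ω') ((1:ℝ)/2)
    rw [hcdef]; linarith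
  obtain ⟨K, hKdef⟩ : ∃ K : ℝ, K = 2 ^ α * c ^ (δ' - α) := ⟨_, rfl⟩
  have hK0 : 0 ≤ K := by
    rw [hKdef]
    exact mul_nonneg h2α.le (Real.rpow_nonneg (by linarith) _)
  have hsub : ∫⁻ ω : ℝ, ENNReal.ofReal ((1 + |ω' - ω|) ^ (-(q/2))) = ENNReal.ofReal I₀ := by
    rw [(Measure.measurePreserving_sub_left volume ω').lintegral_comp hgmeas]
    exact hJ
  have hterm : ∀ k : ℤ, (if k ≠ 0 ∧ k ≠ k' then
      ∫⁻ ω : ℝ, ENNReal.ofReal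
        ((|ω| ^ ((1:ℝ)/2) + |(k : ℝ)|) ^ (-α) *
          (|ω' - ω| ^ ((1:ℝ)/2) + |(k' : ℝ) - (k : ℝ)|) ^ (-β))
      else 0) ≤
      ENNReal.ofReal K * ((ENNReal.ofReal (|(k:ℝ)| ^ (-r))
        + ENNReal.ofReal (|(k':ℝ) - (k:ℝ)| ^ (-r))) * ENNReal.ofReal I₀) := by
    intro k
    split_ifs with hk
    · obtain ⟨hk0, hkk'⟩ := hk
      have hu0 : 0 ≤ |(k:ℝ)| ^ (-r) := Real.rpow_nonneg (abs_nonneg _) _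
      have hv0 : 0 ≤ |(k':ℝ) - (k:ℝ)| ^ (-r) := Real.rpow_nonneg (abs_nonneg _) _
      have hka : (1:ℝ) ≤ |(k:ℝ)| := by
        have h := Int.one_le_abs hk0
        have : ((1:ℤ):ℝ) ≤ ((|k|:ℤ):ℝ) := by exact_mod_cast h
        simpa using this
      have hkb : (1:ℝ) ≤ |(k':ℝ) - (k:ℝ)| := by
        have h0 : k' - k ≠ 0 := sub_ne_zero.mpr (Ne.symm hkk')
        have h := Int.one_le_abs h0
        have h1 : ((1:ℤ):ℝ) ≤ ((|k' - k|:ℤ):ℝ) := by exact_mod_cast h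
        have h2 : ((|k' - k|:ℤ):ℝ) = |(k':ℝ) - (k:ℝ)| := by push_cast; ring_nf
        rw [h2] at h1; simpa using h1
      have hpt : ∀ ω : ℝ, ENNReal.ofReal
          ((|ω| ^ ((1:ℝ)/2) + |(k : ℝ)|) ^ (-α) *
            (|ω' - ω| ^ ((1:ℝ)/2) + |(k' : ℝ) - (k : ℝ)|) ^ (-β))
          ≤ ENNReal.ofReal K * (ENNReal.ofReal (|(k:ℝ)| ^ (-r))
              * ENNReal.ofReal ((1 + |ω|) ^ (-(q/2)))
            + ENNReal.ofReal (|(k':ℝ) - (k:ℝ)| ^ (-r))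
              * ENNReal.ofReal ((1 + |ω' - ω|) ^ (-(q/2)))) := by
        intro ω
        have hx0 : 0 ≤ |ω| ^ ((1:ℝ)/2) := Real.rpow_nonneg (abs_nonneg _) _
        have hy0 : 0 ≤ |ω' - ω| ^ ((1:ℝ)/2) := Real.rpow_nonneg (abs_nonneg _) _
        have ha : 1 ≤ |ω| ^ ((1:ℝ)/2) + |(k:ℝ)| := by linarith
        have hb : 1 ≤ |ω' - ω| ^ ((1:ℝ)/2) + |(k':ℝ) - (k:ℝ)| := by linarith
        have hcab : c ≤ (|ω| ^ ((1:ℝ)/2) + |(k:ℝ)|)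
            + (|ω' - ω| ^ ((1:ℝ)/2) + |(k':ℝ) - (k:ℝ)|) := by
          have h1 := aux_sqrt_tri ω ω'
          have h2 : |(k':ℝ)| ≤ |(k:ℝ)| + |(k':ℝ) - (k:ℝ)| := by
            calc |(k':ℝ)| = |(k:ℝ) + ((k':ℝ) - (k:ℝ))| := by ring_nf
            _ ≤ _ := abs_add_le _ _
          rw [hcdef]; linarith
        have key := aux_key hδ'0 hδ'α hαβ ha hb hc1 hcab
        have hA : (|ω| ^ ((1:ℝ)/2) + |(k:ℝ)|) ^ (-γ)
            ≤ |(k:ℝ)| ^ (-r) * (1 + |ω|) ^ (-(q/2)) :=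
          aux_pt hq0 hr0 hrq hka ω
        have hB' : (|ω' - ω| ^ ((1:ℝ)/2) + |(k':ℝ) - (k:ℝ)|) ^ (-γ)
            ≤ |(k':ℝ) - (k:ℝ)| ^ (-r) * (1 + |ω' - ω|) ^ (-(q/2)) :=
          aux_pt hq0 hr0 hrq hkb (ω' - ω)
        have hreal : (|ω| ^ ((1:ℝ)/2) + |(k:ℝ)|) ^ (-α)
              * (|ω' - ω| ^ ((1:ℝ)/2) + |(k':ℝ) - (k:ℝ)|) ^ (-β)
            ≤ K * (|(k:ℝ)| ^ (-r) * (1 + |ω|) ^ (-(q/2))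
              + |(k':ℝ) - (k:ℝ)| ^ (-r) * (1 + |ω' - ω|) ^ (-(q/2))) := by
          calc (|ω| ^ ((1:ℝ)/2) + |(k:ℝ)|) ^ (-α)
              * (|ω' - ω| ^ ((1:ℝ)/2) + |(k':ℝ) - (k:ℝ)|) ^ (-β)
              ≤ 2 ^ α * c ^ (δ' - α) * ((|ω| ^ ((1:ℝ)/2) + |(k:ℝ)|) ^ (-(β + δ'))
                + (|ω' - ω| ^ ((1:ℝ)/2) + |(k':ℝ) - (k:ℝ)|) ^ (-(β + δ'))) := key
          _ = K * ((|ω| ^ ((1:ℝ)/2) + |(k:ℝ)|) ^ (-γ)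
                + (|ω' - ω| ^ ((1:ℝ)/2) + |(k':ℝ) - (k:ℝ)|) ^ (-γ)) := by
              rw [hKdef, hγdef]
          _ ≤ _ := mul_le_mul_of_nonneg_left (add_le_add hA hB') hK0
        calc ENNReal.ofReal ((|ω| ^ ((1:ℝ)/2) + |(k:ℝ)|) ^ (-α)
              * (|ω' - ω| ^ ((1:ℝ)/2) + |(k':ℝ) - (k:ℝ)|) ^ (-β))
            ≤ ENNReal.ofReal (K * (|(k:ℝ)| ^ (-r) * (1 + |ω|) ^ (-(q/2))
              + |(k':ℝ) - (k:ℝ)| ^ (-r) * (1 + |ω' - ω|) ^ (-(q/2)))) :=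
              ENNReal.ofReal_le_ofReal hreal
        _ = _ := by
            rw [ENNReal.ofReal_mul hK0, ENNReal.ofReal_add (by positivity) (by positivity),
              ENNReal.ofReal_mul hu0, ENNReal.ofReal_mul hv0]
      calc ∫⁻ ω : ℝ, ENNReal.ofReal
            ((|ω| ^ ((1:ℝ)/2) + |(k : ℝ)|) ^ (-α) *
              (|ω' - ω| ^ ((1:ℝ)/2) + |(k' : ℝ) - (k : ℝ)|) ^ (-β))
          ≤ ∫⁻ ω : ℝ, ENNReal.ofReal K * (ENNReal.ofReal (|(k:ℝ)| ^ (-r))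
              * ENNReal.ofReal ((1 + |ω|) ^ (-(q/2)))
            + ENNReal.ofReal (|(k':ℝ) - (k:ℝ)| ^ (-r))
              * ENNReal.ofReal ((1 + |ω' - ω|) ^ (-(q/2)))) := lintegral_mono hpt
      _ = ENNReal.ofReal K * (ENNReal.ofReal (|(k:ℝ)| ^ (-r))
            * (∫⁻ ω : ℝ, ENNReal.ofReal ((1 + |ω|) ^ (-(q/2))))
          + ENNReal.ofReal (|(k':ℝ) - (k:ℝ)| ^ (-r))
            * (∫⁻ ω : ℝ, ENNReal.ofReal ((1 + |ω' - ω|) ^ (-(q/2))))) := by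
          rw [lintegral_const_mul' _ _ ENNReal.ofReal_ne_top,
            lintegral_add_left (hgmeas.const_mul _),
            lintegral_const_mul' _ _ ENNReal.ofReal_ne_top,
            lintegral_const_mul' _ _ ENNReal.ofReal_ne_top]
      _ = _ := by rw [hJ, hsub]; ring
    · exact zero_le
  have hv' : ∑' k : ℤ, ENNReal.ofReal (|(k':ℝ) - (k:ℝ)| ^ (-r)) = ENNReal.ofReal S₀ := by
    rw [← hSofReal]
    calc ∑' k : ℤ, ENNReal.ofReal (|(k':ℝ) - (k:ℝ)| ^ (-r))
        = ∑' k : ℤ, ENNReal.ofReal (|((k' - k : ℤ):ℝ)| ^ (-r)) := by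
          apply tsum_congr
          intro k
          push_cast
          rfl
    _ = ∑' m : ℤ, ENNReal.ofReal (|(m:ℝ)| ^ (-r)) := by
          have h := (Equiv.subLeft k').tsum_eq (fun m : ℤ => ENNReal.ofReal (|(m:ℝ)| ^ (-r)))
          simpa [Equiv.subLeft_apply] using h
  calc (∑' k : ℤ, (if k ≠ 0 ∧ k ≠ k' then
          ∫⁻ ω : ℝ, ENNReal.ofReal
            ((|ω| ^ ((1:ℝ)/2) + |(k : ℝ)|) ^ (-α) *
              (|ω' - ω| ^ ((1:ℝ)/2) + |(k' : ℝ) - (k : ℝ)|) ^ (-β))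
        else 0))
      ≤ ∑' k : ℤ, ENNReal.ofReal K * ((ENNReal.ofReal (|(k:ℝ)| ^ (-r))
        + ENNReal.ofReal (|(k':ℝ) - (k:ℝ)| ^ (-r))) * ENNReal.ofReal I₀) :=
      ENNReal.tsum_le_tsum hterm
  _ = ENNReal.ofReal K * ((ENNReal.ofReal S₀ + ENNReal.ofReal S₀) * ENNReal.ofReal I₀) := by
      rw [ENNReal.tsum_mul_left, ENNReal.tsum_mul_right, ENNReal.tsum_add, hSofReal, hv']
  _ ≤ ENNReal.ofReal ((2 ^ α * (2 * S₀ * I₀) + 1) * c ^ (-α + δ)) := by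
      rw [← ENNReal.ofReal_add hS₀0 hS₀0,
        ← ENNReal.ofReal_mul (by linarith : (0:ℝ) ≤ S₀ + S₀), ← ENNReal.ofReal_mul hK0]
      apply ENNReal.ofReal_le_ofReal
      have hcc : c ^ (δ' - α) ≤ c ^ (-α + δ) :=
        Real.rpow_le_rpow_of_exponent_le hc1 (by linarith)
      have hpow0 : 0 ≤ c ^ (-α + δ) := Real.rpow_nonneg (by linarith) _
      calc K * ((S₀ + S₀) * I₀) = (2 ^ α * (2 * S₀ * I₀)) * c ^ (δ' - α) := by
            rw [hKdef]; ring
      _ ≤ (2 ^ α * (2 * S₀ * I₀)) * c ^ (-α + δ) :=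
          mul_le_mul_of_nonneg_left hcc (by positivity)
      _ ≤ (2 ^ α * (2 * S₀ * I₀) + 1) * c ^ (-α + δ) := by nlinarith
  _ = ENNReal.ofReal ((2 ^ α * (2 * S₀ * I₀) + 1) * (|ω'| ^ ((1:ℝ)/2) + |(k':ℝ)|) ^ (-α + δ)) := by
      rw [hcdef]
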